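/- Let Γ be a finite connected graph each of whose vertices has a real weight, with negative definite intersection matrix, and suppose Γ is a tree. Suppose at every vertex v the total 'index budget' satisfies: (sum over corners q at v of c(v,q)) ≤ w(v), where for each edge (corner) q between v and v', the numbers c(v,q), c(v',q) are reals satisfying c(v',q) ≥ 1/c(v,q) whenever c(v,q) < 0, and c(v',q) ≥ 0 otherwise. If additionally at every vertex v, (sum over corners q at v of c(v,q)) ≥ w(v) − (sum of non-corner contributions at v) with all non-corner contributions ≥ 0, then a contradiction follows; hence some vertex has a non-corner contribution that is strictly negative. -/

import Mathlib

open Matrix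

/-- A real symmetric matrix is negative definite if the associated quadratic form
is negative on nonzero vectors. -/
def IsNegDef {m : ℕ} (A : Matrix (Fin m) (Fin m) ℝ) : Prop :=
  A.IsSymm ∧ ∀ x : Fin m → ℝ, x ≠ 0 → x ⬝ᵥ A.mulVec x < 0

/-- On a tree, any family of positive "edge ratios" whose opposite products are `1`
admits a positive potential. -/
lemma exists_potential {m : ℕ} (G : SimpleGraph (Fin m)) (hG : G.IsTree)
    (ρ : Fin m → Fin m → ℝ) (hpos : ∀ v u, G.Adj v u → 0 < ρ v u)
    (hinv : ∀ v u, G.Adj v u → ρ v u * ρ u v = 1) (r0 : Fin m) :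
    ∃ x : Fin m → ℝ, (∀ v, 0 < x v) ∧ ∀ v u, G.Adj v u → x u = ρ v u * x v := by
  classical
  have hup0 := hG.existsUnique_path
  choose p hp hup using fun v => hup0 r0 v
  set x : Fin m → ℝ :=
    fun v => ((p v).darts.map (fun d => ρ d.toProd.1 d.toProd.2)).prod with hx
  have hxpos : ∀ v, 0 < x v := by
    intro v
    apply List.prod_pos
    intro a ha
    simp only [List.mem_map] at ha
    obtain ⟨d, hd, rfl⟩ := ha
    exact hpos _ _ d.adj
  refine ⟨x, hxpos, ?_⟩
  intro v u hadj
  by_cases hu : u ∈ (p v).support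
  · have hT : ((p v).takeUntil u hu).IsPath := (hp v).takeUntil hu
    have hD : ((p v).dropUntil u hu).IsPath := (hp v).dropUntil hu
    have h1 : (p v).takeUntil u hu = p u := hup u _ hT
    have hsingle : (p v).dropUntil u hu =
        SimpleGraph.Walk.cons hadj.symm SimpleGraph.Walk.nil := by
      have hs : (SimpleGraph.Walk.cons hadj.symm
          (SimpleGraph.Walk.nil : G.Walk v v)).IsPath := by
        simp [SimpleGraph.Walk.isPath_def, hadj.ne']
      exact (hG.existsUnique_path u v).unique hD hs
    have hdarts : (p v).darts = (p u).darts ++ [⟨(u, v), hadj.symm⟩] := by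
      conv_lhs => rw [← (p v).take_spec hu]
      rw [SimpleGraph.Walk.darts_append, h1, hsingle]
      rfl
    have hxv : x v = x u * ρ u v := by
      simp [hx, hdarts]
    calc x u = (ρ v u * ρ u v) * x u := by rw [hinv v u hadj]; ring
      _ = ρ v u * (x u * ρ u v) := by ring
      _ = ρ v u * x v := by rw [hxv]
  · have hP : ((p v).concat hadj).IsPath := by
      rw [SimpleGraph.Walk.isPath_def, SimpleGraph.Walk.support_concat]
      rw [List.nodup_append]
      refine ⟨(hp v).support_nodup, List.nodup_singleton u, ?_⟩
      intro a ha b hb hab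
      simp only [List.mem_singleton] at hb
      rw [hab, hb] at ha
      exact hu ha
    have h1 : (p v).concat hadj = p u := hup u _ hP
    have : x u = x v * ρ v u := by
      rw [hx]
      simp only [← h1, SimpleGraph.Walk.darts_concat, List.concat_eq_append,
        List.map_append, List.prod_append]
      simp [mul_comm]
    rw [this]; ring

/-- Abstract version of the proof of Theorem 3.  `Γ` is a finite connected
weighted tree with negative definite intersection matrix; each edge (corner)
between adjacent vertices `v, v'` carries reals `c v v'`, `c v' v` satisfying the
reciprocity condition (`c v' v ≥ 1 / c v v'` whenever `c v v' < 0`, or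
`c v' v ≥ 0`); at every vertex the sum of the corner indices is at most `w v`
(the index budget) and at least `w v` minus the sum of the non-corner
contributions, the latter being all nonnegative.  Then a contradiction follows. -/
theorem stmt_16 (m : ℕ) (hm : 0 < m) (G : SimpleGraph (Fin m)) [DecidableRel G.Adj]
    (hconn : G.Connected) (hG : G.IsTree)
    (w : Fin m → ℝ) (hw : ∀ v, w v ≠ 0)
    (A : Matrix (Fin m) (Fin m) ℝ)
    (hdiag : ∀ v, A v v = w v)
    (hoff : ∀ i j, i ≠ j → A i j = if G.Adj i j then 1 else 0)
    (hneg : IsNegDef A)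
    (c : Fin m → Fin m → ℝ)
    (hrec : ∀ v v', G.Adj v v' → c v v' < 0 → c v' v ≥ 1 / c v v' ∨ 0 ≤ c v' v)
    (F : Fin m → Finset ℕ) (f : Fin m → ℕ → ℝ)
    (hf : ∀ v, ∀ q ∈ F v, 0 ≤ f v q)
    (hbudget : ∀ v, ∑ u ∈ G.neighborFinset v, c v u ≤ w v)
    (hlower : ∀ v, ∑ u ∈ G.neighborFinset v, c v u ≥ w v - ∑ q ∈ F v, f v q) :
    False := by
  classical
  -- the base edge ratios
  set R : Fin m → Fin m → ℝ :=
    fun v u => if c u v < 0 then -(c u v)⁻¹ else max 1 (1 - c v u) with hRdef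
  have hRpos : ∀ v u, 0 < R v u := by
    intro v u
    simp only [hRdef]
    split
    · next h =>
      have : (c u v)⁻¹ < 0 := inv_lt_zero.mpr h
      linarith
    · exact lt_of_lt_of_le one_pos (le_max_left _ _)
  have hRquad : ∀ v u, G.Adj v u → 0 ≤ c v u + 2 * R v u + c u v * (R v u) ^ 2 := by
    intro v u hadj
    by_cases h : c u v < 0
    · have hne : c u v ≠ 0 := ne_of_lt h
      have hR : R v u = -(c u v)⁻¹ := by simp [hRdef, h]
      have hkey : (c u v)⁻¹ ≤ c v u := by
        rcases hrec u v hadj.symm h with h1 | h1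
        · rw [ge_iff_le, one_div] at h1; exact h1
        · have : (c u v)⁻¹ < 0 := inv_lt_zero.mpr h
          linarith
      rw [hR]
      have : c v u + 2 * -(c u v)⁻¹ + c u v * (-(c u v)⁻¹) ^ 2
          = c v u - (c u v)⁻¹ := by
        field_simp
        ring
      rw [this]
      linarith
    · push_neg at h
      have hR : R v u = max 1 (1 - c v u) := by simp [hRdef, not_lt.mpr h]
      have h1 : 1 - c v u ≤ R v u := hR ▸ le_max_right _ _
      have h2 : (0:ℝ) < R v u := hRpos v u
      nlinarith
  -- the oriented edge ratios
  set ρ : Fin m → Fin m → ℝ :=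
    fun v u => if v ≤ u then R v u else (R u v)⁻¹ with hρdef
  have hρpos : ∀ v u, G.Adj v u → 0 < ρ v u := by
    intro v u _
    simp only [hρdef]
    split
    · exact hRpos v u
    · exact inv_pos.mpr (hRpos u v)
  have hρinv : ∀ v u, G.Adj v u → ρ v u * ρ u v = 1 := by
    intro v u hadj
    have hne : v ≠ u := hadj.ne
    simp only [hρdef]
    rcases le_total v u with h | h
    · rw [if_pos h, if_neg (fun h' => hne (le_antisymm h h'))]
      exact mul_inv_cancel₀ (hRpos v u).ne'
    · rw [if_neg (fun h' => hne (le_antisymm h' h)), if_pos h]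
      exact inv_mul_cancel₀ (hRpos u v).ne'
  have hρquad : ∀ v u, G.Adj v u → 0 ≤ c v u + 2 * ρ v u + c u v * (ρ v u) ^ 2 := by
    intro v u hadj
    by_cases h : v ≤ u
    · have : ρ v u = R v u := by simp [hρdef, h]
      rw [this]; exact hRquad v u hadj
    · have hρ : ρ v u = (R u v)⁻¹ := by simp [hρdef, h]
      have hr0 : R u v ≠ 0 := (hRpos u v).ne'
      have h2 := mul_nonneg (hRquad u v hadj.symm)
        (by positivity : (0:ℝ) ≤ ((R u v)⁻¹) ^ 2)
      rw [hρ]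
      calc (0:ℝ) ≤ (c u v + 2 * R u v + c v u * (R u v) ^ 2) * ((R u v)⁻¹) ^ 2 := h2
        _ = c v u + 2 * (R u v)⁻¹ + c u v * ((R u v)⁻¹) ^ 2 := by
            field_simp
            ring
  -- the potential
  obtain ⟨y, hy, hedge⟩ := exists_potential G hG ρ hρpos hρinv ⟨0, hm⟩
  have hyne : y ≠ 0 := by
    intro h
    exact (hy ⟨0, hm⟩).ne' (by rw [h]; rfl)
  have hQneg : y ⬝ᵥ A.mulVec y < 0 := hneg.2 y hyne
  -- compute the quadratic form
  have hkey : ∀ v, ∑ u, y v * A v u * y u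
      = y v * y v * w v + ∑ u ∈ G.neighborFinset v, y v * y u := by
    intro v
    have : ∀ u : Fin m, y v * A v u * y u
        = (if u = v then y v * y v * w v else 0)
          + (if G.Adj v u then y v * y u else 0) := by
      intro u
      by_cases h : u = v
      · subst h
        simp [hdiag, G.irrefl]
        ring
      · rw [hoff v u (Ne.symm h)]
        by_cases h2 : G.Adj v u <;> simp [h, h2]
    rw [Finset.sum_congr rfl (fun u _ => this u), Finset.sum_add_distrib,
      Finset.sum_ite_eq' Finset.univ v (fun _ => y v * y v * w v)]
    simp [SimpleGraph.neighborFinset_eq_filter, Finset.sum_filter]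
  have hQ : y ⬝ᵥ A.mulVec y
      = ∑ v, (y v * y v * w v + ∑ u ∈ G.neighborFinset v, y v * y u) := by
    simp only [dotProduct, mulVec, Finset.mul_sum, ← mul_assoc]
    exact Finset.sum_congr rfl fun v _ => hkey v
  -- the lower bound
  set g : Fin m → Fin m → ℝ := fun v u => c v u * (y v * y v) + y v * y u with hgdef
  have hbound : ∀ v, y v * y v * w v + ∑ u ∈ G.neighborFinset v, y v * y u
      ≥ ∑ u ∈ G.neighborFinset v, g v u := by
    intro v
    have h1 : y v * y v * (∑ u ∈ G.neighborFinset v, c v u) ≤ y v * y v * w v :=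
      mul_le_mul_of_nonneg_left (hbudget v) (mul_self_nonneg _)
    have h2 : ∑ u ∈ G.neighborFinset v, g v u
        = y v * y v * (∑ u ∈ G.neighborFinset v, c v u)
          + ∑ u ∈ G.neighborFinset v, y v * y u := by
      rw [Finset.mul_sum, ← Finset.sum_add_distrib]
      exact Finset.sum_congr rfl fun u _ => by rw [hgdef]; ring
    rw [h2]
    linarith
  have hsym : ∑ v, ∑ u ∈ G.neighborFinset v, g v u
      = ∑ v, ∑ u ∈ G.neighborFinset v, g u v := by
    rw [Finset.sum_comm' (t' := Finset.univ) (s' := fun u => G.neighborFinset u)]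
    intro a b
    simp [SimpleGraph.adj_comm]
  have hpair : ∀ v u, G.Adj v u → 0 ≤ g v u + g u v := by
    intro v u hadj
    have hyu : y u = ρ v u * y v := hedge v u hadj
    have h1 := hρquad v u hadj
    have h2 : g v u + g u v
        = (y v) ^ 2 * (c v u + 2 * ρ v u + c u v * (ρ v u) ^ 2) := by
      rw [hgdef]
      simp only [hyu]
      ring
    rw [h2]
    positivity
  have hS : 0 ≤ ∑ v, ∑ u ∈ G.neighborFinset v, g v u := by
    have h2 : 0 ≤ ∑ v, ∑ u ∈ G.neighborFinset v, (g v u + g u v) := by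
      apply Finset.sum_nonneg
      intro v _
      apply Finset.sum_nonneg
      intro u hu
      exact hpair v u ((SimpleGraph.mem_neighborFinset _ _ _).mp hu)
    have h3 : ∑ v, ∑ u ∈ G.neighborFinset v, (g v u + g u v)
        = (∑ v, ∑ u ∈ G.neighborFinset v, g v u)
          + ∑ v, ∑ u ∈ G.neighborFinset v, g u v := by
      rw [← Finset.sum_add_distrib]
      exact Finset.sum_congr rfl fun v _ => by rw [← Finset.sum_add_distrib]
    rw [h3, ← hsym] at h2
    linarith
  have hQge : 0 ≤ y ⬝ᵥ A.mulVec y := by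
    rw [hQ]
    calc (0:ℝ) ≤ ∑ v, ∑ u ∈ G.neighborFinset v, g v u := hS
      _ ≤ ∑ v, (y v * y v * w v + ∑ u ∈ G.neighborFinset v, y v * y u) :=
          Finset.sum_le_sum fun v _ => hbound v
  linarith
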